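/- Let B be a DFA and let ∼ be the equivalence relation ∼_V on Pref(L(B)) determined by any minimum-size e.c. decomposition V of B. Then ∼ is right-invariant: if α ∼ α' and a ∈ Σ is such that αa ∈ Pref(L(B)), then α'a ∈ Pref(L(B)) and αa ∼ α'a. -/

import Mathlib

/-- A deterministic finite automaton with a (possibly partial) transition function,
a unique initial state and a set of final states. -/
structure PDFA (α : Type*) (σ : Type*) where
  step : σ → α → Option σ
  start : σ
  accept : Set σ

namespace PDFA

variable {α : Type*} {σ : Type*}

/-- The transition function extended to strings (read left to right). -/
def evalFrom (M : PDFA α σ) : σ → List α → Option σ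
  | q, [] => some q
  | q, a :: w =>
    match M.step q a with
    | none => none
    | some q' => M.evalFrom q' w

/-- `δ(s, w)`. -/
def eval (M : PDFA α σ) (w : List α) : Option σ :=
  M.evalFrom M.start w

/-- The language accepted by the automaton. -/
def language (M : PDFA α σ) : Set (List α) :=
  {w | ∃ q, M.eval w = some q ∧ q ∈ M.accept}

/-- `Pref(L(M))`: the set of prefixes of accepted words. -/
def prefLang (M : PDFA α σ) : Set (List α) :=
  {w | ∃ v, w ++ v ∈ M.language}

/-- `I_q`: the words of `Pref(L(M))` reaching state `q`. -/
def I (M : PDFA α σ) (q : σ) : Set (List α) :=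
  {w | w ∈ M.prefLang ∧ M.eval w = some q}

/-- Every state is reachable from the initial state, and from every state a final
state can be reached. -/
def Trim (M : PDFA α σ) : Prop :=
  (∀ q : σ, ∃ w : List α, M.eval w = some q) ∧
  (∀ q : σ, ∃ w : List α, ∃ q' : σ, M.evalFrom q w = some q' ∧ q' ∈ M.accept)

variable [LinearOrder α]

/-- A sequence of words which is monotone (non-decreasing or non-increasing) in the
co-lexicographic order (i.e., lexicographic order of the reversed words). -/
def MonotoneColex (x : ℕ → List α) : Prop :=
  (∀ i j : ℕ, i ≤ j → (x i).reverse ≤ (x j).reverse) ∨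
  (∀ i j : ℕ, i ≤ j → (x j).reverse ≤ (x i).reverse)

/-- A set of states is entangled if a single monotone sequence of words of
`Pref(L(M))` reaches each of its states infinitely many times. -/
def EntangledStates (M : PDFA α σ) (S : Set σ) : Prop :=
  ∃ x : ℕ → List α, (∀ i, x i ∈ M.prefLang) ∧ MonotoneColex x ∧
    ∀ q ∈ S, ∀ n : ℕ, ∃ i : ℕ, n ≤ i ∧ M.eval (x i) = some q

/-- `ent(M)`: the maximum cardinality of an entangled set of states. -/
noncomputable def ent (M : PDFA α σ) [Fintype σ] : ℕ :=
  sSup {n : ℕ | ∃ S : Finset σ, S.card = n ∧ M.EntangledStates ↑S}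

/-- The strict co-lex partial order on states: `q₁ ≺ q₂` iff `q₁ ≠ q₂` and every word
reaching `q₁` is co-lexicographically smaller than every word reaching `q₂`. -/
def stateLt (M : PDFA α σ) (q₁ q₂ : σ) : Prop :=
  q₁ ≠ q₂ ∧ ∀ u ∈ M.I q₁, ∀ v ∈ M.I q₂, u.reverse < v.reverse

/-- A set of states which is an antichain for the co-lex partial order. -/
def IsColexAntichain (M : PDFA α σ) (S : Set σ) : Prop :=
  ∀ q₁ ∈ S, ∀ q₂ ∈ S, q₁ ≠ q₂ → ¬ M.stateLt q₁ q₂ ∧ ¬ M.stateLt q₂ q₁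

/-- `width(M)`: the maximum cardinality of a co-lex antichain of states. -/
noncomputable def width (M : PDFA α σ) [Fintype σ] : ℕ :=
  sSup {n : ℕ | ∃ S : Finset σ, S.card = n ∧ M.IsColexAntichain ↑S}

/-- `V` is convex in `(Pref(L(M)), ⪯)`. -/
def ConvexIn (M : PDFA α σ) (V : Set (List α)) : Prop :=
  ∀ ⦃u v w : List α⦄, u ∈ V → w ∈ V → v ∈ M.prefLang →
    u.reverse ≤ v.reverse → v.reverse ≤ w.reverse → v ∈ V

/-- A set of words `V` is entangled in `M` if some monotone sequence of elements of `V`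
passes through each state occurring in `V` infinitely many times. -/
def EntangledWords (M : PDFA α σ) (V : Set (List α)) : Prop :=
  ∃ x : ℕ → List α, (∀ i, x i ∈ V) ∧ MonotoneColex x ∧
    ∀ q : σ, (∃ w ∈ V, M.eval w = some q) →
      ∀ n : ℕ, ∃ i : ℕ, n ≤ i ∧ M.eval (x i) = some q

/-- An entangled convex (e.c.) decomposition of `M`: a partition of `Pref(L(M))` into
convex, entangled sets. -/
def IsECD (M : PDFA α σ) (V : Set (Set (List α))) : Prop :=
  (⋃₀ V) = M.prefLang ∧ V.Pairwise Disjoint ∧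
    ∀ W ∈ V, M.ConvexIn W ∧ M.EntangledWords W

/-- A minimum-size e.c. decomposition: a finite e.c. decomposition of minimum cardinality. -/
def IsMinECD (M : PDFA α σ) (V : Set (Set (List α))) : Prop :=
  V.Finite ∧ M.IsECD V ∧
    ∀ V' : Set (Set (List α)), V'.Finite → M.IsECD V' → V.ncard ≤ V'.ncard

/-- The equivalence relation `∼_𝒱`: two words are equivalent iff they reach the same state
and every element of `𝒱` lying strictly co-lexicographically between them intersects `I_q`. -/
def simV (M : PDFA α σ) (V : Set (Set (List α))) (u v : List α) : Prop :=
  M.eval u = M.eval v ∧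
  ∀ W ∈ V,
    (∀ w ∈ W, min u.reverse v.reverse < w.reverse ∧ w.reverse < max u.reverse v.reverse) →
    ∃ w ∈ W, M.eval w = M.eval u

/-- The decomposition-free characterization of `∼`: the two words reach the same state and
the co-lex interval between them is covered by finitely many convex sets, each entangled in
`M` and intersecting `I_q`. -/
def simR (M : PDFA α σ) (u v : List α) : Prop :=
  M.eval u = M.eval v ∧
  ∃ (n : ℕ) (C : Fin n → Set (List α)),
    (∀ i, C i ⊆ M.prefLang ∧ M.ConvexIn (C i) ∧ M.EntangledWords (C i) ∧
      ∃ w ∈ C i, M.eval w = M.eval u) ∧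
    ∀ w ∈ M.prefLang,
      min u.reverse v.reverse ≤ w.reverse → w.reverse ≤ max u.reverse v.reverse →
      w ∈ ⋃ i, C i

end PDFA


section RIAux

variable {α : Type*} [LinearOrder α]

private lemma RI_cons_lt_iff {a b : α} {s t : List α} :
    (a :: s : List α) < b :: t ↔ a < b ∨ a = b ∧ s < t := by
  constructor
  · intro h
    cases h with
    | cons h => exact Or.inr ⟨rfl, h⟩
    | rel h => exact Or.inl h
  · rintro (h | ⟨rfl, h⟩)
    · exact List.Lex.rel h
    · exact List.Lex.cons h

private lemma RI_cons_le_iff {a b : α} {s t : List α} :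
    (a :: s : List α) ≤ b :: t ↔ a < b ∨ a = b ∧ s ≤ t := by
  rw [le_iff_lt_or_eq, le_iff_lt_or_eq, RI_cons_lt_iff]
  constructor
  · rintro ((h | ⟨rfl, h⟩) | h)
    · exact Or.inl h
    · exact Or.inr ⟨rfl, Or.inl h⟩
    · rcases List.cons.injEq .. ▸ h with ⟨rfl, rfl⟩
      exact Or.inr ⟨rfl, Or.inr rfl⟩
  · rintro (h | ⟨rfl, (h | rfl)⟩)
    · exact Or.inl (Or.inl h)
    · exact Or.inl (Or.inr ⟨rfl, h⟩)
    · exact Or.inr rfl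

private lemma RI_cons_le_cons_iff {a : α} {s t : List α} :
    (a :: s : List α) ≤ a :: t ↔ s ≤ t := by
  rw [RI_cons_le_iff]
  simp

private lemma RI_cons_lt_cons_iff {a : α} {s t : List α} :
    (a :: s : List α) < a :: t ↔ s < t := by
  rw [RI_cons_lt_iff]
  simp

private lemma RI_not_cons_le_nil {a : α} {s : List α} : ¬ ((a :: s : List α) ≤ []) := by
  intro h
  exact absurd ((List.nil_lt_cons a s).trans_le h) (lt_irrefl _)

private lemma RI_sandwich_le {a : α} {s t w : List α}
    (h1 : (a :: s : List α) ≤ w) (h2 : w ≤ a :: t) : ∃ l, w = a :: l ∧ s ≤ l ∧ l ≤ t := by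
  cases w with
  | nil => exact absurd h1 RI_not_cons_le_nil
  | cons b l =>
    rcases RI_cons_le_iff.mp h1 with hab | ⟨rfl, hsl⟩
    · rcases RI_cons_le_iff.mp h2 with hba | ⟨rfl, _⟩
      · exact absurd (hab.trans hba) (lt_irrefl _)
      · exact absurd hab (lt_irrefl _)
    · rcases RI_cons_le_iff.mp h2 with hba | ⟨_, hlt⟩
      · exact absurd hba (lt_irrefl _)
      · exact ⟨l, rfl, hsl, hlt⟩

private lemma RI_sandwich_lt {a : α} {s t w : List α}
    (h1 : (a :: s : List α) < w) (h2 : w < a :: t) : ∃ l, w = a :: l ∧ s < l ∧ l < t := by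
  cases w with
  | nil => exact absurd ((List.nil_lt_cons a s).trans h1) (lt_irrefl _)
  | cons b l =>
    rcases RI_cons_lt_iff.mp h1 with hab | ⟨rfl, hsl⟩
    · rcases RI_cons_lt_iff.mp h2 with hba | ⟨rfl, _⟩
      · exact absurd (hab.trans hba) (lt_irrefl _)
      · exact absurd hab (lt_irrefl _)
    · rcases RI_cons_lt_iff.mp h2 with hba | ⟨_, hlt⟩
      · exact absurd hba (lt_irrefl _)
      · exact ⟨l, rfl, hsl, hlt⟩

private lemma RI_rev_append (w : List α) (a : α) : (w ++ [a]).reverse = a :: w.reverse := by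
  simp

/-- strict sandwich at the word level -/
private lemma RI_append_sandwich_lt {u v w : List α} (a : α)
    (h1 : a :: u < w.reverse) (h2 : w.reverse < a :: v) :
    ∃ w', w = w' ++ [a] ∧ u < w'.reverse ∧ w'.reverse < v := by
  obtain ⟨l, hl, hs, ht⟩ := RI_sandwich_lt h1 h2
  refine ⟨l.reverse, ?_, by simpa using hs, by simpa using ht⟩
  rw [← List.reverse_reverse w, hl]
  simp

private lemma RI_append_sandwich_le {u v w : List α} (a : α)
    (h1 : a :: u ≤ w.reverse) (h2 : w.reverse ≤ a :: v) :
    ∃ w', w = w' ++ [a] ∧ u ≤ w'.reverse ∧ w'.reverse ≤ v := by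
  obtain ⟨l, hl, hs, ht⟩ := RI_sandwich_le h1 h2
  refine ⟨l.reverse, ?_, by simpa using hs, by simpa using ht⟩
  rw [← List.reverse_reverse w, hl]
  simp

private lemma RI_infinite_of_cofinal {s : Set ℕ} (h : ∀ n, ∃ k, n ≤ k ∧ k ∈ s) : s.Infinite := by
  intro hfin
  obtain ⟨m, hm⟩ := hfin.bddAbove
  obtain ⟨k, hk1, hk2⟩ := h (m + 1)
  exact absurd (hm hk2) (by omega)

private lemma RI_cofinal_of_infinite {s : Set ℕ} (h : s.Infinite) : ∀ n, ∃ k, n ≤ k ∧ k ∈ s := by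
  intro n
  by_contra hc
  push_neg at hc
  refine h (Set.Finite.subset (Set.finite_Iio n) (fun k hk => ?_))
  by_contra hlt
  exact hc k (by simpa using hlt) hk

end RIAux

section RIAuto

variable {α : Type*} {σ : Type*}

private lemma RI_evalFrom_append (M : PDFA α σ) (q : σ) (w₁ w₂ : List α) :
    M.evalFrom q (w₁ ++ w₂) = (M.evalFrom q w₁).bind fun q' => M.evalFrom q' w₂ := by
  induction w₁ generalizing q with
  | nil => simp [PDFA.evalFrom]
  | cons b l ih =>
    simp only [List.cons_append, PDFA.evalFrom]
    cases M.step q b with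
    | none => simp
    | some q' => simp [ih]

private lemma RI_eval_append (M : PDFA α σ) (w x : List α) :
    M.eval (w ++ x) = (M.eval w).bind fun q' => M.evalFrom q' x :=
  RI_evalFrom_append M M.start w x

private lemma RI_eval_append_congr (M : PDFA α σ) {w w' : List α}
    (he : M.eval w' = M.eval w) (x : List α) : M.eval (w' ++ x) = M.eval (w ++ x) := by
  rw [RI_eval_append, RI_eval_append, he]

private lemma RI_mem_prefLang_of_eval_eq (M : PDFA α σ) {w w' : List α}
    (hw : w ∈ M.prefLang) (he : M.eval w' = M.eval w) : w' ∈ M.prefLang := by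
  obtain ⟨ext, qf, hq, hacc⟩ := hw
  exact ⟨ext, qf, by rw [RI_eval_append_congr M he ext]; exact hq, hacc⟩

private lemma RI_eval_isSome (M : PDFA α σ) {w : List α} (hw : w ∈ M.prefLang) :
    ∃ q, M.eval w = some q := by
  obtain ⟨ext, qf, hq, -⟩ := hw
  rw [RI_eval_append] at hq
  cases hqq : M.eval w with
  | none => rw [hqq] at hq; simp at hq
  | some q => exact ⟨q, rfl⟩

private lemma RI_prefix_mem_prefLang (M : PDFA α σ) {w w' : List α}
    (h : w ++ w' ∈ M.prefLang) : w ∈ M.prefLang := by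
  obtain ⟨ext, hx⟩ := h
  exact ⟨w' ++ ext, by rwa [← List.append_assoc]⟩

/-- transfer of single-letter extensions along state-equality -/
private lemma RI_ext_single (M : PDFA α σ) {w w' : List α} {a : α}
    (hwa : w ++ [a] ∈ M.prefLang) (he : M.eval w' = M.eval w) :
    w' ++ [a] ∈ M.prefLang ∧ M.eval (w' ++ [a]) = M.eval (w ++ [a]) :=
  ⟨RI_mem_prefLang_of_eval_eq M hwa (RI_eval_append_congr M he [a]),
    RI_eval_append_congr M he [a]⟩

variable [LinearOrder α]

private lemma RI_monotone_strip {x y : ℕ → List α} (a : α)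
    (hxy : ∀ i, x i = y i ++ [a]) (hx : PDFA.MonotoneColex x) : PDFA.MonotoneColex y := by
  cases hx with
  | inl h =>
    left
    intro i j hij
    have := h i j hij
    rw [hxy i, hxy j, RI_rev_append, RI_rev_append] at this
    exact RI_cons_le_cons_iff.mp this
  | inr h =>
    right
    intro i j hij
    have := h i j hij
    rw [hxy i, hxy j, RI_rev_append, RI_rev_append] at this
    exact RI_cons_le_cons_iff.mp this

private lemma RI_monotone_append {z : ℕ → List α} (hz : PDFA.MonotoneColex z)
    (f : ℕ → ℕ) (hf : Monotone f) (a : α) :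
    PDFA.MonotoneColex (fun j => z (f j) ++ [a]) := by
  cases hz with
  | inl h =>
    left
    intro i j hij
    simp only [RI_rev_append]
    exact RI_cons_le_cons_iff.mpr (h _ _ (hf hij))
  | inr h =>
    right
    intro i j hij
    simp only [RI_rev_append]
    exact RI_cons_le_cons_iff.mpr (h _ _ (hf hij))

/-- contiguity: a monotone sequence in `Pref(L)` eventually stays in a single class of a
finite partition into convex sets. -/
private lemma RI_tail_class (M : PDFA α σ) (V : Set (Set (List α))) (hfin : V.Finite)
    (hconv : ∀ f ∈ V, M.ConvexIn f) (hcover : ⋃₀ V = M.prefLang)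
    (y : ℕ → List α) (hy : ∀ n, y n ∈ M.prefLang) (hmono : PDFA.MonotoneColex y) :
    ∃ V₀ ∈ V, ∃ N, ∀ n, N ≤ n → y n ∈ V₀ := by
  have hcl : ∀ n, ∃ f : V, y n ∈ (f : Set (List α)) := by
    intro n
    have : y n ∈ ⋃₀ V := by rw [hcover]; exact hy n
    obtain ⟨f, hf, hyf⟩ := this
    exact ⟨⟨f, hf⟩, hyf⟩
  choose c hc using hcl
  haveI : Finite V := hfin.to_subtype
  obtain ⟨V₀, hV₀⟩ := Finite.exists_infinite_fiber c
  have hinf : (c ⁻¹' {V₀} : Set ℕ).Infinite := Set.infinite_coe_iff.mp hV₀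
  obtain ⟨N, hN⟩ := hinf.nonempty
  have hNV : c N = V₀ := hN
  have hyN : y N ∈ (V₀ : Set (List α)) := hNV ▸ hc N
  refine ⟨V₀, V₀.2, N, fun n hn => ?_⟩
  obtain ⟨m, hm1, hm2⟩ := RI_cofinal_of_infinite hinf n
  have hym : y m ∈ (V₀ : Set (List α)) := (show c m = V₀ from hm2) ▸ hc m
  cases hmono with
  | inl h => exact hconv V₀ V₀.2 hyN hym (hy n) (h N n hn) (h n m hm1)
  | inr h => exact hconv V₀ V₀.2 hym hyN (hy n) (h n m hm1) (h N n hn)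

end RIAuto

section RIMerge

variable {α : Type*} {σ : Type*} [LinearOrder α]

/-- The key minimality argument: if `W ≠ W₁` are classes of a minimum-size e.c.
decomposition, with anchors `A ∈ W`, `B ∈ W₁`, such that every state reached from inside the
co-lex interval `[A, B]` is also reached inside `W₁`, and every state reached in `W` is
reached in `W₁`, then we could merge all classes meeting the interval together with `W` and
`W₁` into a single class, contradicting minimality. -/
private lemma RI_merge (M : PDFA α σ) (V : Set (Set (List α))) (hV : M.IsMinECD V)
    (W W₁ : Set (List α)) (hWV : W ∈ V) (hW₁V : W₁ ∈ V) (hne : W ≠ W₁)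
    (A B : List α) (hA : A ∈ W) (hB : B ∈ W₁)
    (hmid : ∀ m ∈ M.prefLang, min A.reverse B.reverse ≤ m.reverse →
      m.reverse ≤ max A.reverse B.reverse → ∃ w' ∈ W₁, M.eval w' = M.eval m)
    (hWst : ∀ w ∈ W, ∃ w' ∈ W₁, M.eval w' = M.eval w) : False := by
  obtain ⟨hfin, ⟨hcover, hdisj, hclass⟩, hmin⟩ := hV
  have hsub : ∀ f ∈ V, f ⊆ M.prefLang := by
    intro f hf w hw
    rw [← hcover]
    exact ⟨f, hf, hw⟩
  have hApre : A ∈ M.prefLang := hsub W hWV hA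
  have hBpre : B ∈ M.prefLang := hsub W₁ hW₁V hB
  have hAlo : min A.reverse B.reverse ≤ A.reverse := min_le_left _ _
  have hBlo : min A.reverse B.reverse ≤ B.reverse := min_le_right _ _
  have hAhi : A.reverse ≤ max A.reverse B.reverse := le_max_left _ _
  have hBhi : B.reverse ≤ max A.reverse B.reverse := le_max_right _ _
  -- the family to be merged
  set F : Set (Set (List α)) :=
    {f | f ∈ V ∧ (f = W ∨ f = W₁ ∨ ∃ e ∈ f, min A.reverse B.reverse ≤ e.reverse ∧
      e.reverse ≤ max A.reverse B.reverse)} with hF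
  have hFsub : F ⊆ V := fun f hf => hf.1
  have hWF : W ∈ F := ⟨hWV, Or.inl rfl⟩
  have hW₁F : W₁ ∈ F := ⟨hW₁V, Or.inr (Or.inl rfl)⟩
  have eq_of_inter : ∀ f g, f ∈ V → g ∈ V → ∀ x, x ∈ f → x ∈ g → f = g := by
    intro f g hf hg x hxf hxg
    by_contra hne'
    exact (Set.disjoint_left.mp (hdisj hf hg hne') hxf) hxg
  -- a class of F having an element strictly below the interval must be W or W₁
  have claim1 : ∀ f ∈ F, ∀ e₁ ∈ f, e₁.reverse < min A.reverse B.reverse → f = W ∨ f = W₁ := by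
    rintro f ⟨hfV, (rfl | rfl | ⟨e, hef, helo, hehi⟩)⟩ e₁ he₁ hlt
    · exact Or.inl rfl
    · exact Or.inr rfl
    · rcases min_choice A.reverse B.reverse with hmc | hmc
      · have hAf : A ∈ f := (hclass f hfV).1 he₁ hef hApre
          (by rw [← hmc]; exact hlt.le) (by rw [← hmc]; exact helo)
        exact Or.inl (eq_of_inter f W hfV hWV A hAf hA)
      · have hBf : B ∈ f := (hclass f hfV).1 he₁ hef hBpre
          (by rw [← hmc]; exact hlt.le) (by rw [← hmc]; exact helo)
        exact Or.inr (eq_of_inter f W₁ hfV hW₁V B hBf hB)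
  have claim2 : ∀ f ∈ F, ∀ e₁ ∈ f, max A.reverse B.reverse < e₁.reverse → f = W ∨ f = W₁ := by
    rintro f ⟨hfV, (rfl | rfl | ⟨e, hef, helo, hehi⟩)⟩ e₁ he₁ hlt
    · exact Or.inl rfl
    · exact Or.inr rfl
    · rcases max_choice A.reverse B.reverse with hmc | hmc
      · have hAf : A ∈ f := (hclass f hfV).1 hef he₁ hApre
          (by rw [← hmc]; exact hehi) (by rw [← hmc]; exact hlt.le)
        exact Or.inl (eq_of_inter f W hfV hWV A hAf hA)
      · have hBf : B ∈ f := (hclass f hfV).1 hef he₁ hBpre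
          (by rw [← hmc]; exact hehi) (by rw [← hmc]; exact hlt.le)
        exact Or.inr (eq_of_inter f W₁ hfV hW₁V B hBf hB)
  -- every state occurring in the union occurs in W₁
  have hUst : ∀ f ∈ F, ∀ w ∈ f, ∃ w' ∈ W₁, M.eval w' = M.eval w := by
    intro f hfF w hwf
    rcases lt_or_ge w.reverse (min A.reverse B.reverse) with hlt | hge
    · rcases claim1 f hfF w hwf hlt with heq | heq
      · exact hWst w (heq ▸ hwf)
      · exact ⟨w, heq ▸ hwf, rfl⟩
    rcases le_or_gt w.reverse (max A.reverse B.reverse) with hle | hgt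
    · exact hmid w (hsub f (hFsub hfF) hwf) hge hle
    · rcases claim2 f hfF w hwf hgt with heq | heq
      · exact hWst w (heq ▸ hwf)
      · exact ⟨w, heq ▸ hwf, rfl⟩
  set U : Set (List α) := ⋃₀ F with hU
  have hWsubU : W ⊆ U := fun w hw => ⟨W, hWF, hw⟩
  have hW₁subU : W₁ ⊆ U := fun w hw => ⟨W₁, hW₁F, hw⟩
  have hUconv : M.ConvexIn U := by
    rintro e₁ m e₂ ⟨f₁, hf₁F, he₁⟩ ⟨f₂, hf₂F, he₂⟩ hm h1 h2
    rcases le_or_gt (min A.reverse B.reverse) m.reverse with hge | hlt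
    · rcases le_or_gt m.reverse (max A.reverse B.reverse) with hle | hgt
      · have hmV : m ∈ ⋃₀ V := by rw [hcover]; exact hm
        obtain ⟨fm, hfmV, hmfm⟩ := hmV
        exact ⟨fm, ⟨hfmV, Or.inr (Or.inr ⟨m, hmfm, hge, hle⟩)⟩, hmfm⟩
      · rcases claim2 f₂ hf₂F e₂ he₂ (hgt.trans_le h2) with heq | heq
        · exact hWsubU ((hclass W hWV).1 hA (heq ▸ he₂) hm ((hAhi.trans_lt hgt).le) h2)
        · exact hW₁subU ((hclass W₁ hW₁V).1 hB (heq ▸ he₂) hm ((hBhi.trans_lt hgt).le) h2)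
    · rcases claim1 f₁ hf₁F e₁ he₁ (h1.trans_lt hlt) with heq | heq
      · exact hWsubU ((hclass W hWV).1 (heq ▸ he₁) hA hm h1 ((hlt.trans_le hAlo).le))
      · exact hW₁subU ((hclass W₁ hW₁V).1 (heq ▸ he₁) hB hm h1 ((hlt.trans_le hBlo).le))
  have hUent : M.EntangledWords U := by
    obtain ⟨ζ, hζU, hζmono, hζst⟩ := (hclass W₁ hW₁V).2
    refine ⟨ζ, fun i => hW₁subU (hζU i), hζmono, ?_⟩
    rintro s ⟨w, hwU, hws⟩ n
    obtain ⟨f, hfF, hwf⟩ := hwU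
    obtain ⟨w', hw'W₁, hw'e⟩ := hUst f hfF w hwf
    exact hζst s ⟨w', hw'W₁, by rw [hw'e]; exact hws⟩ n
  set V' : Set (Set (List α)) := insert U (V \ F) with hV'
  have hV'fin : V'.Finite := (Set.Finite.diff hfin : (V \ F).Finite).insert U
  have hV'cover : ⋃₀ V' = M.prefLang := by
    rw [← hcover]
    ext x
    constructor
    · rintro ⟨f, hf, hxf⟩
      rcases hf with rfl | ⟨hfV, -⟩
      · obtain ⟨g, hgF, hxg⟩ := hxf
        exact ⟨g, hFsub hgF, hxg⟩
      · exact ⟨f, hfV, hxf⟩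
    · rintro ⟨f, hfV, hxf⟩
      by_cases hfF : f ∈ F
      · exact ⟨U, Set.mem_insert _ _, ⟨f, hfF, hxf⟩⟩
      · exact ⟨f, Set.mem_insert_of_mem _ ⟨hfV, hfF⟩, hxf⟩
  have hdisjUg : ∀ g ∈ V \ F, Disjoint U g := by
    intro g hg
    refine Set.disjoint_sUnion_left.mpr (fun t htF => ?_)
    exact hdisj (hFsub htF) hg.1 (fun e => hg.2 (e ▸ htF))
  have hV'disj : V'.Pairwise Disjoint := by
    rintro f hf g hg hnefg
    rcases hf with rfl | hf'
    · rcases hg with rfl | hg'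
      · exact absurd rfl hnefg
      · exact hdisjUg g hg'
    · rcases hg with rfl | hg'
      · exact (hdisjUg f hf').symm
      · exact hdisj hf'.1 hg'.1 hnefg
  have hV'ECD : M.IsECD V' := by
    refine ⟨hV'cover, hV'disj, ?_⟩
    rintro f hf
    rcases hf with rfl | ⟨hfV, -⟩
    · exact ⟨hUconv, hUent⟩
    · exact hclass f hfV
  have hcard := hmin V' hV'fin hV'ECD
  have hFfin : F.Finite := hfin.subset hFsub
  have h2F : 2 ≤ F.ncard := by
    have hpairsub : ({W, W₁} : Set (Set (List α))) ⊆ F := by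
      rintro f (rfl | rfl)
      · exact hWF
      · exact hW₁F
    calc 2 = ({W, W₁} : Set (Set (List α))).ncard := (Set.ncard_pair hne).symm
      _ ≤ F.ncard := Set.ncard_le_ncard hpairsub hFfin
  have hFV : F.ncard ≤ V.ncard := Set.ncard_le_ncard hFsub hfin
  have hdiffcard : (V \ F).ncard = V.ncard - F.ncard := Set.ncard_diff hFsub hFfin
  have hinsert : V'.ncard ≤ (V \ F).ncard + 1 := Set.ncard_insert_le _ _
  omega

end RIMerge

section RIKey

variable {α : Type*} {σ : Type*} [LinearOrder α]

private lemma RI_key2 (M : PDFA α σ) (V : Set (Set (List α))) (hV : M.IsMinECD V)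
    (u v : List α) (hu : u ∈ M.prefLang) (hv : v ∈ M.prefLang)
    (huv : u.reverse < v.reverse) (h : M.simV V u v) (a : α) (ha : u ++ [a] ∈ M.prefLang)
    (W : Set (List α)) (hWV : W ∈ V)
    (hW : ∀ w ∈ W, a :: u.reverse < w.reverse ∧ w.reverse < a :: v.reverse) :
    ∃ w ∈ W, M.eval w = M.eval (u ++ [a]) := by
  have hfin := hV.1
  have hcover := hV.2.1.1
  have hclass := hV.2.1.2.2
  have hconvAll : ∀ f ∈ V, M.ConvexIn f := fun f hf => (hclass f hf).1
  have hsub : ∀ f ∈ V, f ⊆ M.prefLang := by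
    intro f hf w hw
    rw [← hcover]
    exact ⟨f, hf, hw⟩
  obtain ⟨x, hxW, hxmono, hxst⟩ := (hclass W hWV).2
  have hxpre : ∀ i, x i ∈ M.prefLang := fun i => hsub W hWV (hxW i)
  have hdec : ∀ i, ∃ y, x i = y ++ [a] ∧ u.reverse < y.reverse ∧ y.reverse < v.reverse := by
    intro i
    obtain ⟨h1, h2⟩ := hW (x i) (hxW i)
    exact RI_append_sandwich_lt a h1 h2
  choose y hxy hylt hylt' using hdec
  have hypre : ∀ i, y i ∈ M.prefLang := by
    intro i
    refine RI_prefix_mem_prefLang M (w' := [a]) ?_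
    rw [← hxy i]
    exact hxpre i
  have hymono : PDFA.MonotoneColex y := RI_monotone_strip a hxy hxmono
  obtain ⟨V₀, hV₀V, N, hN⟩ := RI_tail_class M V hfin hconvAll hcover y hypre hymono
  -- some word of V₀ reaches the same state as u
  have hw₀ex : ∃ w₀ ∈ V₀, M.eval w₀ = M.eval u := by
    by_cases hall : ∀ w ∈ V₀, u.reverse < w.reverse ∧ w.reverse < v.reverse
    · refine h.2 V₀ hV₀V (fun w hw => ?_)
      rw [min_eq_left huv.le, max_eq_right huv.le]
      exact hall w hw
    · push_neg at hall
      obtain ⟨e, heV₀, hcond⟩ := hall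
      rcases le_or_gt e.reverse u.reverse with hle | hgt
      · exact ⟨u, hconvAll V₀ hV₀V heV₀ (hN N le_rfl) hu hle (hylt N).le, rfl⟩
      · exact ⟨v, hconvAll V₀ hV₀V (hN N le_rfl) heV₀ hv (hylt' N).le (hcond hgt), h.1.symm⟩
  obtain ⟨w₀, hw₀V₀, hw₀e⟩ := hw₀ex
  have hw₀a : w₀ ++ [a] ∈ M.prefLang ∧ M.eval (w₀ ++ [a]) = M.eval (u ++ [a]) :=
    RI_ext_single M ha hw₀e
  -- the convex entangled set of a-extensions of V₀
  set C : Set (List α) := {m | ∃ w ∈ V₀, m = w ++ [a] ∧ m ∈ M.prefLang} with hC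
  have hCconv : M.ConvexIn C := by
    rintro m₁ m m₂ ⟨w₁, hw₁, rfl, hm₁p⟩ ⟨w₂, hw₂, rfl, hm₂p⟩ hmp h1 h2
    rw [RI_rev_append] at h1 h2
    obtain ⟨l, hml, hsl, hlt⟩ := RI_append_sandwich_le a h1 h2
    have hlpre : l ∈ M.prefLang := RI_prefix_mem_prefLang M (w' := [a]) (by rw [← hml]; exact hmp)
    exact ⟨l, hconvAll V₀ hV₀V hw₁ hw₂ hlpre hsl hlt, hml, hmp⟩
  obtain ⟨z, hzV₀, hzmono, hzst⟩ := (hclass V₀ hV₀V).2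
  obtain ⟨q, hq⟩ := RI_eval_isSome M hu
  set P : ℕ → Prop := fun k => z k ++ [a] ∈ M.prefLang with hP
  have hGinf : (setOf P).Infinite := by
    refine RI_infinite_of_cofinal (fun n => ?_)
    obtain ⟨k, hk1, hk2⟩ := hzst q ⟨w₀, hw₀V₀, hw₀e.trans hq⟩ n
    exact ⟨k, hk1, (RI_ext_single M hw₀a.1 (hk2.trans (hw₀e.trans hq).symm)).1⟩
  haveI : DecidablePred P := Classical.decPred P
  have hfmono : StrictMono (Nat.nth P) := Nat.nth_strictMono hGinf
  have hfm : ∀ j, P (Nat.nth P j) := fun j => Nat.nth_mem_of_infinite hGinf j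
  set t : ℕ → List α := fun j => z (Nat.nth P j) ++ [a] with ht
  have htpre : ∀ j, t j ∈ M.prefLang := hfm
  have htmono : PDFA.MonotoneColex t := RI_monotone_append hzmono (Nat.nth P) hfmono.monotone a
  obtain ⟨W₁, hW₁V, M₀, hM₀⟩ := RI_tail_class M V hfin hconvAll hcover t htpre htmono
  -- every state occurring in C occurs in W₁
  have KEY : ∀ m ∈ C, ∃ w' ∈ W₁, M.eval w' = M.eval m := by
    rintro m ⟨w, hwV₀, rfl, hmp⟩
    obtain ⟨s, hs⟩ := RI_eval_isSome M (hsub V₀ hV₀V hwV₀)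
    obtain ⟨k, hk1, hk2⟩ := hzst s ⟨w, hwV₀, hs⟩ (Nat.nth P M₀)
    have hzkw : M.eval (z k) = M.eval w := hk2.trans hs.symm
    have hPk : P k := (RI_ext_single M hmp hzkw).1
    have hfj : Nat.nth P (Nat.count P k) = k := Nat.nth_count hPk
    have hjM₀ : M₀ ≤ Nat.count P k := by
      refine hfmono.le_iff_le.mp ?_
      rw [hfj]
      exact hk1
    refine ⟨t (Nat.count P k), hM₀ _ hjM₀, ?_⟩
    show M.eval (z (Nat.nth P (Nat.count P k)) ++ [a]) = M.eval (w ++ [a])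
    rw [hfj]
    exact (RI_ext_single M hmp hzkw).2
  have hw₀aC : w₀ ++ [a] ∈ C := ⟨w₀, hw₀V₀, rfl, hw₀a.1⟩
  obtain ⟨wp, hwpW₁, hwpe⟩ := KEY _ hw₀aC
  by_cases hWeq : W₁ = W
  · exact ⟨wp, hWeq ▸ hwpW₁, hwpe.trans hw₀a.2⟩
  exfalso
  have hAinC : x N ∈ C := ⟨y N, hN N le_rfl, hxy N, hxpre N⟩
  have hBinC : t M₀ ∈ C := ⟨z (Nat.nth P M₀), hzV₀ _, rfl, htpre M₀⟩
  refine RI_merge M V hV W W₁ hWV hW₁V (fun e => hWeq e.symm) (x N) (t M₀) (hxW N)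
    (hM₀ M₀ le_rfl) ?_ ?_
  · intro m hmp hlo hhi
    have hmC : m ∈ C := by
      rcases le_total (x N).reverse (t M₀).reverse with hAB | hBA
      · exact hCconv hAinC hBinC hmp (by rwa [min_eq_left hAB] at hlo)
          (by rwa [max_eq_right hAB] at hhi)
      · exact hCconv hBinC hAinC hmp (by rwa [min_eq_right hBA] at hlo)
          (by rwa [max_eq_left hBA] at hhi)
    exact KEY m hmC
  · intro w hwW
    obtain ⟨s, hs⟩ := RI_eval_isSome M (hsub W hWV hwW)
    obtain ⟨i, hiN, hie⟩ := hxst s ⟨w, hwW, hs⟩ N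
    obtain ⟨w', hw', he'⟩ := KEY (x i) ⟨y i, hN i hiN, hxy i, hxpre i⟩
    exact ⟨w', hw', he'.trans (hie.trans hs.symm)⟩

end RIKey

/-- Lemma: the equivalence relation `∼_V` determined by a minimum-size e.c. decomposition
is right-invariant. -/
theorem simV_right_invariant {α σ : Type*} [LinearOrder α] [Fintype σ]
    (M : PDFA α σ) (hM : M.Trim)
    (V : Set (Set (List α))) (hV : M.IsMinECD V)
    (u v : List α) (hu : u ∈ M.prefLang) (hv : v ∈ M.prefLang)
    (h : M.simV V u v) (a : α) (ha : u ++ [a] ∈ M.prefLang) :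
    v ++ [a] ∈ M.prefLang ∧ M.simV V (u ++ [a]) (v ++ [a]) := by
  have hEq : M.eval u = M.eval v := h.1
  have hEq2 : M.eval (v ++ [a]) = M.eval (u ++ [a]) := RI_eval_append_congr M hEq.symm [a]
  have hva : v ++ [a] ∈ M.prefLang := RI_mem_prefLang_of_eval_eq M ha hEq2
  refine ⟨hva, hEq2.symm, ?_⟩
  intro W hWV hWcond
  rcases lt_trichotomy u.reverse v.reverse with hlt | heq | hgt
  · refine RI_key2 M V hV u v hu hv hlt h a ha W hWV (fun w hw => ?_)
    have hcw := hWcond w hw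
    rw [RI_rev_append, RI_rev_append, min_eq_left (List.cons_le_cons a hlt.le),
      max_eq_right (List.cons_le_cons a hlt.le)] at hcw
    exact hcw
  · have huveq : u = v := List.reverse_injective heq
    subst huveq
    obtain ⟨x, hxW, -, -⟩ := (hV.2.1.2.2 W hWV).2
    have hcontra := hWcond (x 0) (hxW 0)
    rw [min_self, max_self] at hcontra
    exact absurd (hcontra.1.trans hcontra.2) (lt_irrefl _)
  · have hsym : M.simV V v u := by
      refine ⟨hEq.symm, fun W' hW'V hcond => ?_⟩
      obtain ⟨w, hw, he⟩ := h.2 W' hW'V (fun w hw => by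
        have := hcond w hw
        rwa [min_comm v.reverse, max_comm v.reverse] at this)
      exact ⟨w, hw, he.trans hEq⟩
    obtain ⟨w, hw, he⟩ := RI_key2 M V hV v u hv hu hgt hsym a hva W hWV (fun w hw => by
      have hcw := hWcond w hw
      rwa [RI_rev_append, RI_rev_append, min_eq_right (List.cons_le_cons a hgt.le),
        max_eq_left (List.cons_le_cons a hgt.le)] at hcw)
    exact ⟨w, hw, he.trans hEq2⟩
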